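/- For each n ≥ 1, μ(n) = μ⁻(n) − 1. -/
import Mathlib


/-- The in-degree of vertex `z` in the digraph on `Fin n` with arc relation `A`
(`A x z` means `x` dominates `z`). -/
noncomputable def inDeg {n : ℕ} (A : Fin n → Fin n → Prop) (z : Fin n) : ℕ :=
  Nat.card {x : Fin n // A x z}

/-- The maximum in-degree `Δ⁻(D)` of the digraph on `Fin n` with arc relation `A`. -/
noncomputable def maxInDeg {n : ℕ} (A : Fin n → Fin n → Prop) : ℕ :=
  Finset.univ.sup (inDeg A)

/-- A digraph is mediated if for every pair of distinct vertices `x, y` there is a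
vertex `z` with `x, y ∈ N⁻[z]` (possibly `z = x` or `z = y`). -/
def Mediated {n : ℕ} (A : Fin n → Fin n → Prop) : Prop :=
  ∀ x y : Fin n, x ≠ y → ∃ z : Fin n, (x = z ∨ A x z) ∧ (y = z ∨ A y z)

/-- The `n`th mediation number `μ(n)`: the minimum of `Δ⁻(D)` over all mediated
digraphs (irreflexive arc relations) on `n` vertices. -/
noncomputable def mu (n : ℕ) : ℕ :=
  sInf { d : ℕ | ∃ A : Fin n → Fin n → Prop, Irreflexive A ∧ Mediated A ∧ maxInDeg A = d }

/-- `f(n) = ⌈(√(4n−3) − 1)/2⌉`. -/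
noncomputable def f (n : ℕ) : ℕ := ⌈(Real.sqrt (4 * (n : ℝ) - 3) - 1) / 2⌉₊
/-- A family of `n` blocks on the point set `Fin n` is 2-covering if every pair of
distinct points is contained in some block. -/
def TwoCovering {n : ℕ} (F : Fin n → Finset (Fin n)) : Prop :=
  ∀ x y : Fin n, x ≠ y → ∃ i : Fin n, x ∈ F i ∧ y ∈ F i

/-- A family has a system of distinct representatives if one can pick pairwise
distinct points, one from each block. -/
def HasSDR {n : ℕ} (F : Fin n → Finset (Fin n)) : Prop :=
  ∃ r : Fin n → Fin n, Function.Injective r ∧ ∀ i : Fin n, r i ∈ F i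

/-- A family of `n` blocks on `Fin n` (hence symmetric) is mediated if it is
2-covering and has an SDR. -/
def MediatedFamily {n : ℕ} (F : Fin n → Finset (Fin n)) : Prop :=
  TwoCovering F ∧ HasSDR F

/-- The maximum cardinality of a block of the family. -/
def mcard {n : ℕ} (F : Fin n → Finset (Fin n)) : ℕ :=
  Finset.univ.sup fun i => (F i).card

/-- `μ⁻(n)`: the minimum of `mcard F` over all mediated families on `[n]`. -/
noncomputable def muMinus (n : ℕ) : ℕ :=
  sInf { m : ℕ | ∃ F : Fin n → Finset (Fin n), MediatedFamily F ∧ mcard F = m }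

/-- For each `n ≥ 1`, `μ(n) = μ⁻(n) − 1`. -/

lemma inDeg_eq_card {n : ℕ} (A : Fin n → Fin n → Prop) (z : Fin n)
    [DecidablePred (fun x => A x z)] :
    inDeg A z = (Finset.univ.filter (fun x => A x z)).card := by
  rw [inDeg, Nat.card_eq_fintype_card, Fintype.card_subtype]

lemma sup_add_one' {n : ℕ} (hn : 0 < n) (g : Fin n → ℕ) :
    (Finset.univ.sup fun z => g z + 1) = Finset.univ.sup g + 1 := by
  apply le_antisymm
  · exact Finset.sup_le fun z _ => by
      have := Finset.le_sup (f := g) (Finset.mem_univ z); omega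
  · obtain ⟨z, _, hz⟩ := Finset.exists_mem_eq_sup Finset.univ
      ⟨⟨0, hn⟩, Finset.mem_univ _⟩ g
    rw [hz]
    exact Finset.le_sup (f := fun z => g z + 1) (Finset.mem_univ z)

lemma sup_sub_one' {n : ℕ} (hn : 0 < n) (g : Fin n → ℕ) (hg : ∀ z, 1 ≤ g z) :
    (Finset.univ.sup fun z => g z - 1) = Finset.univ.sup g - 1 := by
  apply le_antisymm
  · exact Finset.sup_le fun z _ => by
      have := Finset.le_sup (f := g) (Finset.mem_univ z); omega
  · obtain ⟨z, _, hz⟩ := Finset.exists_mem_eq_sup Finset.univ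
      ⟨⟨0, hn⟩, Finset.mem_univ _⟩ g
    rw [hz]
    exact Finset.le_sup (f := fun z => g z - 1) (Finset.mem_univ z)

lemma digraph_to_family {n : ℕ} (hn : 0 < n) (A : Fin n → Fin n → Prop)
    (hirr : Irreflexive A) (hmed : Mediated A) :
    ∃ F : Fin n → Finset (Fin n), MediatedFamily F ∧ mcard F = maxInDeg A + 1 := by
  classical
  refine ⟨fun z => insert z (Finset.univ.filter (fun x => A x z)), ⟨?_, ?_⟩, ?_⟩
  · intro x y hxy
    obtain ⟨z, hx, hy⟩ := hmed x y hxy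
    refine ⟨z, ?_, ?_⟩
    · exact Finset.mem_insert.2 (hx.imp id fun h => Finset.mem_filter.2 ⟨Finset.mem_univ _, h⟩)
    · exact Finset.mem_insert.2 (hy.imp id fun h => Finset.mem_filter.2 ⟨Finset.mem_univ _, h⟩)
  · exact ⟨id, Function.injective_id, fun i => Finset.mem_insert_self _ _⟩
  · have hcard : ∀ z : Fin n,
        (insert z (Finset.univ.filter (fun x => A x z))).card = inDeg A z + 1 := by
      intro z
      rw [Finset.card_insert_of_notMem (by simp [hirr z]), inDeg_eq_card]
    rw [mcard]
    calc (Finset.univ.sup fun z =>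
          (insert z (Finset.univ.filter (fun x => A x z))).card)
        = Finset.univ.sup fun z => inDeg A z + 1 := by
          apply Finset.sup_congr rfl; intro z _; exact hcard z
      _ = maxInDeg A + 1 := sup_add_one' hn (inDeg A)

lemma family_to_digraph {n : ℕ} (hn : 0 < n) (F : Fin n → Finset (Fin n))
    (hF : MediatedFamily F) :
    ∃ A : Fin n → Fin n → Prop, Irreflexive A ∧ Mediated A ∧
      maxInDeg A = mcard F - 1 ∧ 1 ≤ mcard F := by
  classical
  obtain ⟨hcov, r, hrinj, hrmem⟩ := hF
  have hbij : Function.Bijective r := (Finite.injective_iff_bijective).1 hrinj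
  set e : Fin n ≃ Fin n := Equiv.ofBijective r hbij with he
  have hre : ∀ i, r i = e i := fun i => rfl
  have hrsymm : ∀ z, r (e.symm z) = z := fun z => by rw [hre]; exact e.apply_symm_apply z
  have hzmem : ∀ z : Fin n, z ∈ F (e.symm z) := fun z => by
    have := hrmem (e.symm z)
    rwa [hrsymm] at this
  refine ⟨fun x z => x ∈ F (e.symm z) ∧ x ≠ z, fun z hz => hz.2 rfl, ?_, ?_, ?_⟩
  · intro x y hxy
    obtain ⟨i, hx, hy⟩ := hcov x y hxy
    refine ⟨r i, ?_, ?_⟩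
    · by_cases hxz : x = r i
      · exact Or.inl hxz
      · refine Or.inr ⟨?_, hxz⟩
        rw [hre, e.symm_apply_apply]; exact hx
    · by_cases hyz : y = r i
      · exact Or.inl hyz
      · refine Or.inr ⟨?_, hyz⟩
        rw [hre, e.symm_apply_apply]; exact hy
  · have hdeg : ∀ z : Fin n,
        inDeg (fun x z => x ∈ F (e.symm z) ∧ x ≠ z) z = (F (e.symm z)).card - 1 := by
      intro z
      rw [inDeg_eq_card]
      have : (Finset.univ.filter fun x => x ∈ F (e.symm z) ∧ x ≠ z)
          = (F (e.symm z)).erase z := by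
        ext x; simp [Finset.mem_erase, and_comm]
      rw [this, Finset.card_erase_of_mem (hzmem z)]
    have hsup : (Finset.univ.sup fun z => (F (e.symm z)).card)
        = Finset.univ.sup fun i => (F i).card := by
      apply le_antisymm
      · exact Finset.sup_le fun z _ =>
          Finset.le_sup (f := fun i => (F i).card) (Finset.mem_univ (e.symm z))
      · exact Finset.sup_le fun i _ => by
          have := Finset.le_sup (f := fun z => (F (e.symm z)).card)
            (Finset.mem_univ (e i))
          simpa [e.symm_apply_apply] using this
    rw [maxInDeg]
    calc (Finset.univ.sup fun z => inDeg (fun x z => x ∈ F (e.symm z) ∧ x ≠ z) z)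
        = Finset.univ.sup fun z => (F (e.symm z)).card - 1 := by
          apply Finset.sup_congr rfl; intro z _; exact hdeg z
      _ = (Finset.univ.sup fun z => (F (e.symm z)).card) - 1 :=
          sup_sub_one' hn _ (fun z => Finset.card_pos.2 ⟨z, hzmem z⟩)
      _ = mcard F - 1 := by rw [hsup, mcard]
  · have : 1 ≤ (F ⟨0, hn⟩).card := Finset.card_pos.2 ⟨r ⟨0, hn⟩, hrmem _⟩
    exact this.trans (Finset.le_sup (f := fun i => (F i).card) (Finset.mem_univ _))

theorem mu_eq_muMinus_sub_one (n : ℕ) (hn : 1 ≤ n) : mu n = muMinus n - 1 := by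
  classical
  set S := { d : ℕ | ∃ A : Fin n → Fin n → Prop, Irreflexive A ∧ Mediated A ∧ maxInDeg A = d }
  set T := { m : ℕ | ∃ F : Fin n → Finset (Fin n), MediatedFamily F ∧ mcard F = m }
  have hSne : S.Nonempty := by
    refine ⟨maxInDeg (fun x z : Fin n => x ≠ z), fun x z : Fin n => x ≠ z,
      fun x h => h rfl, ?_, rfl⟩
    intro x y hxy
    exact ⟨x, Or.inl rfl, Or.inr (Ne.symm hxy)⟩
  have hST : ∀ d ∈ S, d + 1 ∈ T := by
    rintro d ⟨A, hirr, hmed, rfl⟩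
    obtain ⟨F, hF, hc⟩ := digraph_to_family hn A hirr hmed
    exact ⟨F, hF, hc⟩
  have hTS : ∀ m ∈ T, 1 ≤ m ∧ m - 1 ∈ S := by
    rintro m ⟨F, hF, rfl⟩
    obtain ⟨A, hirr, hmed, hc, h1⟩ := family_to_digraph hn F hF
    exact ⟨h1, A, hirr, hmed, hc⟩
  have hTne : T.Nonempty := ⟨_, hST _ (Nat.sInf_mem hSne)⟩
  have h1 : sInf T ≤ sInf S + 1 := Nat.sInf_le (hST _ (Nat.sInf_mem hSne))
  obtain ⟨hT1, hTmem⟩ := hTS _ (Nat.sInf_mem hTne)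
  have h2 : sInf S ≤ sInf T - 1 := Nat.sInf_le hTmem
  have : mu n = sInf S := rfl
  have : muMinus n = sInf T := rfl
  show sInf S = sInf T - 1
  omega
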